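/- Let φ : (-a,a) → ℝ be a homeomorphism with φ(0)=0, and f : [0,T]×ℝ×ℝ → ℝ continuous. Suppose u ∈ C¹([0,T]) satisfies u = φ⁻¹(-Q_φ(K(N_f u))) + H(φ⁻¹[K(N_f u) − Q_φ(K(N_f u))]), where K(v)(t) = −∫ₜᵀ v(s)ds, H(v)(t) = ∫₀ᵗ v(s)ds, N_f(u)(t) = f(t,u(t),u'(t)), and Q_φ(w) is the unique constant with ∫₀ᵀ φ⁻¹(w(t) − Q_φ(w)) dt = 0. Then u(0) = u(T), u'(T) = u(0), ‖u'‖_∞ < a, φ∘u' is continuously differentiable, and (φ(u'(t)))' = f(t,u(t),u'(t)) for all t ∈ [0,T]. -/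

import Mathlib

open intervalIntegral MeasureTheory Set

theorem stmt10 (a T : ℝ) (ha : 0 < a) (hT : 0 < T)
    (φ ψ : ℝ → ℝ)
    (hφc : ContinuousOn φ (Set.Ioo (-a) a)) (hφ0 : φ 0 = 0)
    (hψc : Continuous ψ) (hψmem : ∀ y, ψ y ∈ Set.Ioo (-a) a)
    (hφψ : ∀ y, φ (ψ y) = y) (hψφ : ∀ x ∈ Set.Ioo (-a) a, ψ (φ x) = x)
    (f : ℝ → ℝ → ℝ → ℝ)
    (hf : Continuous fun p : ℝ × ℝ × ℝ => f p.1 p.2.1 p.2.2)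
    (u u' : ℝ → ℝ)
    (hu : ∀ t ∈ Set.Icc (0:ℝ) T, HasDerivWithinAt u (u' t) (Set.Icc 0 T) t)
    (hu'c : ContinuousOn u' (Set.Icc 0 T))
    (Qv : ℝ)
    (hQ : (∫ t in (0:ℝ)..T, ψ (-(∫ s in t..T, f s (u s) (u' s)) - Qv)) = 0)
    (hfix : ∀ t ∈ Set.Icc (0:ℝ) T,
      u t = ψ (-Qv) + ∫ s in (0:ℝ)..t, ψ (-(∫ r in s..T, f r (u r) (u' r)) - Qv)) :
    u 0 = u T ∧ u' T = u 0 ∧ (∀ t ∈ Set.Icc (0:ℝ) T, |u' t| < a) ∧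
    ∃ v : ℝ → ℝ, ContinuousOn v (Set.Icc 0 T) ∧
      ∀ t ∈ Set.Icc (0:ℝ) T,
        HasDerivWithinAt (fun s => φ (u' s)) (v t) (Set.Icc 0 T) t ∧
        v t = f t (u t) (u' t) := by
  set h : ℝ → ℝ := fun t => f t (u t) (u' t) with hh
  set F : ℝ → ℝ := fun t => ∫ r in t..T, h r with hF
  set g : ℝ → ℝ := fun t => ψ (-F t - Qv) with hg
  have h0T : (0:ℝ) ∈ Set.Icc (0:ℝ) T := ⟨le_refl 0, hT.le⟩
  have hT0T : T ∈ Set.Icc (0:ℝ) T := ⟨hT.le, le_refl T⟩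
  have huc : ContinuousOn u (Set.Icc 0 T) := fun t ht => (hu t ht).continuousWithinAt
  have hhc : ContinuousOn h (Set.Icc 0 T) := by
    exact hf.comp_continuousOn (continuousOn_id.prodMk (huc.prodMk hu'c))
  have hInt : ∀ s ∈ Set.Icc (0:ℝ) T, ∀ t ∈ Set.Icc (0:ℝ) T,
      IntervalIntegrable h volume s t := fun s hs t ht =>
    (hhc.mono (Set.uIcc_subset_Icc hs ht)).intervalIntegrable
  have hmeas : ∀ t : ℝ, StronglyMeasurableAtFilter h (nhdsWithin t (Set.Icc (0:ℝ) T)) :=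
    fun t => hhc.stronglyMeasurableAtFilter_nhdsWithin measurableSet_Icc t
  -- derivative of F
  have hFd : ∀ t ∈ Set.Icc (0:ℝ) T,
      HasDerivWithinAt F (-(h t)) (Set.Icc 0 T) t := by
    intro t ht
    haveI : Fact (t ∈ Set.Icc (0:ℝ) T) := ⟨ht⟩
    exact intervalIntegral.integral_hasDerivWithinAt_left (hInt t ht T hT0T)
      (hmeas t) (hhc.continuousWithinAt ht)
  have hFc : ContinuousOn F (Set.Icc 0 T) := fun t ht => (hFd t ht).continuousWithinAt
  have hgc : ContinuousOn g (Set.Icc 0 T) :=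
    hψc.comp_continuousOn ((hFc.neg).sub continuousOn_const)
  -- derivative of t ↦ ∫ 0..t g
  have hGd : ∀ t ∈ Set.Icc (0:ℝ) T,
      HasDerivWithinAt (fun x => ∫ s in (0:ℝ)..x, g s) (g t) (Set.Icc 0 T) t := by
    intro t ht
    haveI : Fact (t ∈ Set.Icc (0:ℝ) T) := ⟨ht⟩
    exact intervalIntegral.integral_hasDerivWithinAt_right
      ((hgc.mono (Set.uIcc_subset_Icc h0T ht)).intervalIntegrable)
      (hgc.stronglyMeasurableAtFilter_nhdsWithin measurableSet_Icc t)
      (hgc.continuousWithinAt ht)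
  -- u has derivative g within Icc
  have hud : ∀ t ∈ Set.Icc (0:ℝ) T, HasDerivWithinAt u (g t) (Set.Icc 0 T) t := by
    intro t ht
    exact (((hGd t ht).const_add (ψ (-Qv))).congr
      (fun s hs => hfix s hs) (hfix t ht))
  -- u' = g on Icc
  have hu'g : ∀ t ∈ Set.Icc (0:ℝ) T, u' t = g t := by
    intro t ht
    have hud1 := (hu t ht).derivWithin ((uniqueDiffOn_Icc hT) t ht)
    have hud2 := (hud t ht).derivWithin ((uniqueDiffOn_Icc hT) t ht)
    rw [← hud1, ← hud2]
  -- values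
  have hu0 : u 0 = ψ (-Qv) := by
    have := hfix 0 h0T
    simpa using this
  have huT : u T = ψ (-Qv) := by
    have := hfix T hT0T
    rw [this]
    simp only [hg, hF, hh] at hQ ⊢
    rw [hQ, add_zero]
  have hgT : g T = ψ (-Qv) := by
    simp [hg, hF, intervalIntegral.integral_same]
  refine ⟨hu0.trans huT.symm, ?_, ?_, ?_⟩
  · rw [hu'g T hT0T, hgT, hu0]
  · intro t ht
    rw [hu'g t ht]
    have := hψmem (-F t - Qv)
    rw [Set.mem_Ioo] at this
    rw [abs_lt]
    exact ⟨this.1, this.2⟩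
  · refine ⟨h, hhc, fun t ht => ⟨?_, rfl⟩⟩
    have hφu' : ∀ s ∈ Set.Icc (0:ℝ) T, φ (u' s) = -F s - Qv := by
      intro s hs
      rw [hu'g s hs, hg]
      exact hφψ _
    have hd : HasDerivWithinAt (fun s => -F s - Qv) (h t) (Set.Icc 0 T) t := by
      have := ((hFd t ht).neg).sub_const Qv
      simpa using this
    exact hd.congr (fun s hs => (hφu' s hs)) (hφu' t ht)
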